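/- Consider a star graph with center v_0 and leaves t_1, …, t_n, where the edge {v_0, t_i} has positive integer weight γ_i, and let d_1, …, d_n be deadlines. Then there exists a walk starting at v_0 that visits each leaf t_i within time d_i if and only if there exists a permutation σ of {1,…,n} such that for every k ∈ {1,…,n}: γ_{σ(k)} + 2·Σ_{j<k} γ_{σ(j)} ≤ d_{σ(k)}. (This is the correspondence between covering routes on SIMPLE-STAR instances and feasible schedules with processing times 2γ_i and deadlines d_i + γ_i.) -/

import Mathlib

/-- `StarStep n γ u v c` holds iff `{u, v}` is an edge of weight `c` of the star graph
with center `none` and leaves `some i` at distance `γ i` from the center. -/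
inductive StarStep (n : ℕ) (γ : Fin n → ℕ) : Option (Fin n) → Option (Fin n) → ℕ → Prop
  | out (i : Fin n) : StarStep n γ none (some i) (γ i)
  | back (i : Fin n) : StarStep n γ (some i) none (γ i)

lemma starStep_elim {n : ℕ} {γ : Fin n → ℕ} {u v : Option (Fin n)} {c : ℕ}
    (h : StarStep n γ u v c) :
    (∃ i, u = none ∧ v = some i ∧ c = γ i) ∨ ∃ i, u = some i ∧ v = none ∧ c = γ i := by
  cases h with
  | out i => exact Or.inl ⟨i, rfl, rfl, rfl⟩
  | back i => exact Or.inr ⟨i, rfl, rfl, rfl⟩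

lemma sum_Iio_fin {n : ℕ} (k : Fin n) (g : ℕ → ℕ) :
    ∑ j ∈ Finset.Iio k, g j.val = ∑ p ∈ Finset.range k.val, g p := by
  refine Finset.sum_bij' (fun j _ => j.val)
    (fun p hp => (⟨p, lt_trans (Finset.mem_range.mp hp) k.isLt⟩ : Fin n)) ?_ ?_ ?_ ?_ ?_
  · intro a ha
    simpa using (Finset.mem_Iio.mp ha : a < k)
  · intro a ha
    simpa [Finset.mem_Iio, Fin.lt_def] using Finset.mem_range.mp ha
  · intro a ha; rfl
  · intro a ha; rfl
  · intro a ha; rfl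

lemma sum_half (g : ℕ → ℕ) : ∀ k, ∑ l ∈ Finset.range (2*k+1), g (l/2)
    = g k + 2 * ∑ p ∈ Finset.range k, g p := by
  intro k
  induction k with
  | zero => simp
  | succ k ih =>
    have h1 : 2*(k+1)+1 = (2*k+1) + 1 + 1 := by ring
    have h2 : (2*k+1)/2 = k := by omega
    have h3 : (2*k+1+1)/2 = k+1 := by omega
    rw [h1, Finset.sum_range_succ, Finset.sum_range_succ, ih, Finset.sum_range_succ, h2, h3]
    ring

/-- On a SIMPLE-STAR instance, a walk from the center visiting every leaf `tᵢ` within its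
deadline `dᵢ` exists iff there is a permutation `σ` of the leaves such that
`γ_{σ(k)} + 2·Σ_{j<k} γ_{σ(j)} ≤ d_{σ(k)}` for every `k`. -/
theorem stmt7 (n : ℕ) (γ : Fin n → ℕ) (hγ : ∀ i, 0 < γ i) (d : Fin n → ℕ) :
    (∃ (m : ℕ) (x : ℕ → Option (Fin n)) (c : ℕ → ℕ),
        x 0 = none ∧
        (∀ j < m, StarStep n γ (x j) (x (j + 1)) (c j)) ∧
        (∀ i : Fin n, ∃ j ≤ m, x j = some i ∧ (∑ l ∈ Finset.range j, c l) ≤ d i)) ↔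
      ∃ σ : Equiv.Perm (Fin n), ∀ k : Fin n,
        γ (σ k) + 2 * ∑ j ∈ Finset.Iio k, γ (σ j) ≤ d (σ k) := by
  classical
  constructor
  · rintro ⟨m, x, c, hx0, hstep, hvis⟩
    -- the set of leaves visited within the first `j` steps
    set V : ℕ → Finset (Fin n) :=
      fun j => Finset.univ.filter (fun i => ∃ l ≤ j, x l = some i) with hV
    set T : ℕ → ℕ := fun j => ∑ l ∈ Finset.range j, c l with hT
    have hmemV : ∀ j (i : Fin n), i ∈ V j ↔ ∃ l ≤ j, x l = some i := by
      intro j i; simp [hV]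
    have key : ∀ j ≤ m,
        (x j = none → 2 * ∑ s ∈ V j, γ s ≤ T j) ∧
        (∀ i, x j = some i → γ i + 2 * ∑ s ∈ V j \ {i}, γ s ≤ T j) := by
      intro j
      induction j with
      | zero =>
        intro _
        constructor
        · intro _
          have : V 0 = ∅ := by
            ext i
            simp only [hmemV, Finset.notMem_empty, iff_false]
            rintro ⟨l, hl, hxl⟩
            interval_cases l
            rw [hx0] at hxl; cases hxl
          simp [this, hT]
        · intro i hi
          rw [hx0] at hi; cases hi
      | succ j ih =>
        intro hjm
        have ihj := ih (by omega)
        have hs := hstep j (by omega)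
        have hTsucc : T (j+1) = T j + c j := Finset.sum_range_succ c j
        rcases starStep_elim hs with ⟨i, hu, hv, hc⟩ | ⟨i, hu, hv, hc⟩
        · -- step out to leaf i
          constructor
          · intro h; rw [hv] at h; cases h
          · intro i' hi'
            rw [hv] at hi'
            obtain rfl : i = i' := Option.some.injEq .. ▸ hi'
            have hsub : V (j+1) \ {i} ⊆ V j := by
              intro s hsmem
              rw [Finset.mem_sdiff, hmemV] at hsmem
              obtain ⟨⟨l, hl, hxl⟩, hsne⟩ := hsmem
              rw [hmemV]
              rcases Nat.lt_or_ge l (j+1) with h | h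
              · exact ⟨l, by omega, hxl⟩
              · exfalso
                have : l = j + 1 := by omega
                subst this
                rw [hv] at hxl
                exact (Finset.notMem_singleton.mp hsne) (by
                  exact (Option.some.injEq .. ▸ hxl.symm))
            have hle : ∑ s ∈ V (j+1) \ {i}, γ s ≤ ∑ s ∈ V j, γ s :=
              Finset.sum_le_sum_of_subset hsub
            have h1 := ihj.1 hu
            rw [hTsucc, hc]
            omega
        · -- step back from leaf i
          have hiVj : i ∈ V j := (hmemV j i).mpr ⟨j, le_refl j, hu⟩
          have h2 := ihj.2 i hu
          constructor
          · intro _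
            have hsub : V (j+1) ⊆ V j := by
              intro s hsmem
              rw [hmemV] at hsmem ⊢
              obtain ⟨l, hl, hxl⟩ := hsmem
              rcases Nat.lt_or_ge l (j+1) with h | h
              · exact ⟨l, by omega, hxl⟩
              · exfalso
                have : l = j + 1 := by omega
                subst this
                rw [hv] at hxl
                cases hxl
            have hle : ∑ s ∈ V (j+1), γ s ≤ ∑ s ∈ V j, γ s :=
              Finset.sum_le_sum_of_subset hsub
            have hsplit : γ i + ∑ s ∈ V j \ {i}, γ s = ∑ s ∈ V j, γ s := by
              rw [← Finset.erase_eq]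
              exact Finset.add_sum_erase _ γ hiVj
            rw [hTsucc, hc]
            omega
          · intro i' hi'
            rw [hv] at hi'; cases hi'
      -- done with key
    -- first-visit times
    have hexvis : ∀ i : Fin n, ∃ j, x j = some i := by
      intro i
      obtain ⟨j, _, hj, _⟩ := hvis i
      exact ⟨j, hj⟩
    set f : Fin n → ℕ := fun i => Nat.find (hexvis i) with hf
    have hfx : ∀ i, x (f i) = some i := fun i => Nat.find_spec (hexvis i)
    have hfm : ∀ i, f i ≤ m ∧ T (f i) ≤ d i := by
      intro i
      obtain ⟨j, hjm, hj, hd⟩ := hvis i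
      have hle : f i ≤ j := Nat.find_min' (hexvis i) hj
      refine ⟨le_trans hle hjm, le_trans ?_ hd⟩
      exact Finset.sum_le_sum_of_subset (Finset.range_subset_range.mpr hle)
    have hfinj : Function.Injective f := by
      intro a b hab
      have := hfx a
      rw [hab, hfx b] at this
      exact (Option.some.injEq .. ▸ this.symm)
    refine ⟨Tuple.sort f, fun k => ?_⟩
    set σ := Tuple.sort f with hσ
    set i := σ k with hi
    have hmono : Monotone (f ∘ σ) := Tuple.monotone_sort f
    have hk := key (f i) (hfm i).1
    have hkey := hk.2 i (hfx i)
    have himg : (Finset.Iio k).image σ ⊆ V (f i) \ {i} := by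
      intro s hs
      rw [Finset.mem_image] at hs
      obtain ⟨p, hp, rfl⟩ := hs
      rw [Finset.mem_Iio] at hp
      have hne : σ p ≠ i := by
        intro h
        exact absurd (σ.injective h) (ne_of_lt hp)
      have hle : f (σ p) ≤ f i := hmono (le_of_lt hp)
      rw [Finset.mem_sdiff, hmemV]
      exact ⟨⟨f (σ p), hle, hfx (σ p)⟩, Finset.notMem_singleton.mpr hne⟩
    have hsum : ∑ j ∈ Finset.Iio k, γ (σ j) ≤ ∑ s ∈ V (f i) \ {i}, γ s := by
      rw [← Finset.sum_image (fun a _ b _ h => σ.injective h)]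
      exact Finset.sum_le_sum_of_subset himg
    have := (hfm i).2
    omega
  · -- backward direction: construct the walk from the schedule
    rintro ⟨σ, hσ⟩
    set γ' : ℕ → ℕ := fun p => if h : p < n then γ (σ ⟨p, h⟩) else 0 with hγ'
    refine ⟨2*n, fun j => if h : j % 2 = 1 ∧ j < 2*n then some (σ ⟨j/2, by omega⟩) else none,
      fun j => γ' (j/2), by simp, ?_, ?_⟩
    · intro j hj
      rcases Nat.even_or_odd j with he | ho
      · have hmod : j % 2 = 0 := Nat.even_iff.mp he
        have h1 : ¬(j % 2 = 1 ∧ j < 2*n) := by omega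
        have h2 : (j+1) % 2 = 1 ∧ j + 1 < 2*n := by omega
        beta_reduce
        rw [dif_neg h1, dif_pos h2]
        have hdiv : (j+1)/2 = j/2 := by omega
        have hjn : j / 2 < n := by omega
        have hcj : γ' (j/2) = γ (σ ⟨j/2, hjn⟩) := by simp only [hγ']; rw [dif_pos hjn]
        have hfin : (⟨(j+1)/2, by omega⟩ : Fin n) = ⟨j/2, hjn⟩ := by
          simp [Fin.mk.injEq, hdiv]
        rw [hfin, hcj]
        exact StarStep.out _
      · have hmod : j % 2 = 1 := Nat.odd_iff.mp ho
        have h1 : j % 2 = 1 ∧ j < 2*n := ⟨hmod, hj⟩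
        have h2 : ¬((j+1) % 2 = 1 ∧ j + 1 < 2*n) := by omega
        beta_reduce
        rw [dif_pos h1, dif_neg h2]
        have hjn : j / 2 < n := by omega
        have hcj : γ' (j/2) = γ (σ ⟨j/2, hjn⟩) := by simp only [hγ']; rw [dif_pos hjn]
        rw [hcj]
        exact StarStep.back _
    · intro i
      set k : Fin n := σ.symm i with hk
      refine ⟨2*k.val+1, by omega, ?_, ?_⟩
      · have h1 : (2*k.val+1) % 2 = 1 ∧ 2*k.val+1 < 2*n := by
          have := k.isLt; omega
        beta_reduce
        rw [dif_pos h1]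
        have hdiv : (2*k.val+1)/2 = k.val := by omega
        have hfin : (⟨(2*k.val+1)/2, by omega⟩ : Fin n) = k := by
          simp [Fin.ext_iff, hdiv]
        rw [hfin, hk]
        simp
      · rw [sum_half]
        have hkn : k.val < n := k.isLt
        have e1 : γ' k.val = γ (σ k) := by
          simp only [hγ']; rw [dif_pos hkn]
        have e2 : ∑ p ∈ Finset.range k.val, γ' p = ∑ j ∈ Finset.Iio k, γ (σ j) := by
          rw [← sum_Iio_fin k γ']
          apply Finset.sum_congr rfl
          intro j hj
          simp only [hγ']
          rw [dif_pos j.isLt]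
        have e3 : σ k = i := Equiv.apply_symm_apply σ i
        rw [e1, e2, e3]
        have := hσ k
        rw [e3] at this
        exact this
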